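/- For any stable normalized Bessel sequence {g_n}_{n≥0} there exists a unique admissible sequence {e_n}_{n≥0} of unit vectors (i.e., with ⟨e_n, e_{n+1}⟩ ≥ 0 for all n) such that g_0 = e_0 and g_n = e_n - ∑_{i<n} ⟨e_n, e_i⟩ g_i; moreover this sequence {e_n} is stable. -/

import Mathlib

open scoped ComplexInnerProductSpace
open Finset

set_option maxHeartbeats 1000000

set_option synthInstance.maxHeartbeats 200000

namespace KaczB

variable {H : Type*} [NormedAddCommGroup H] [InnerProductSpace ℂ H]

noncomputable def QL (g e : ℕ → H) (n : ℕ) : H →ₗ[ℂ] H :=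
  LinearMap.id - ∑ k ∈ Finset.range n,
    ((innerSL ℂ (g k)).toLinearMap.smulRight (e k))

noncomputable def AL (g e : ℕ → H) (n : ℕ) : H →ₗ[ℂ] H :=
  LinearMap.id - ∑ k ∈ Finset.range n,
    ((innerSL ℂ (e k)).toLinearMap.smulRight (g k))

lemma QL_apply (g e : ℕ → H) (n : ℕ) (x : H) :
    QL g e n x = x - ∑ k ∈ range n, ⟪g k, x⟫ • e k := by
  simp [QL, LinearMap.sub_apply, LinearMap.coe_sum, Finset.sum_apply]

lemma AL_apply (g e : ℕ → H) (n : ℕ) (y : H) :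
    AL g e n y = y - ∑ k ∈ range n, ⟪e k, y⟫ • g k := by
  simp [AL, LinearMap.sub_apply, LinearMap.coe_sum, Finset.sum_apply]

lemma QL_zero (g e : ℕ → H) (x : H) : QL g e 0 x = x := by simp [QL_apply]

lemma QL_succ (g e : ℕ → H) (n : ℕ) (x : H) :
    QL g e (n+1) x = QL g e n x - ⟪g n, x⟫ • e n := by
  simp [QL_apply, Finset.sum_range_succ]; abel

lemma AL_succ (g e : ℕ → H) (n : ℕ) (y : H) :
    AL g e (n+1) y = AL g e n y - ⟪e n, y⟫ • g n := by
  simp [AL_apply, Finset.sum_range_succ]; abel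

lemma adj (g e : ℕ → H) (n : ℕ) (y x : H) :
    ⟪AL g e n y, x⟫ = ⟪y, QL g e n x⟫ := by
  rw [QL_apply, AL_apply, inner_sub_left, inner_sub_right, sum_inner, inner_sum]
  congr 1
  refine Finset.sum_congr rfl fun k _ => ?_
  rw [inner_smul_left, inner_smul_right, ← inner_conj_symm y (e k)]
  ring

lemma inner_self_one {v : H} (hv : ‖v‖ = 1) : ⟪v, v⟫ = 1 := by
  rw [inner_self_eq_norm_sq_to_K, hv]; norm_num

/-- relation at index n -/
def Rel (g e : ℕ → H) (n : ℕ) : Prop :=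
  g n = e n - ∑ i ∈ range n, ⟪e i, e n⟫ • g i

lemma hAe (g e : ℕ → H) (h0 : g 0 = e 0) {n : ℕ} (hr : 0 < n → Rel g e n) :
    AL g e n (e n) = g n := by
  rcases Nat.eq_zero_or_pos n with h | h
  · subst h; simp [AL_apply, h0]
  · rw [AL_apply]; exact (hr h).symm

lemma hQg (g e : ℕ → H) (h0 : g 0 = e 0) {n : ℕ} (hr : 0 < n → Rel g e n)
    (x : H) : ⟪g n, x⟫ = ⟪e n, QL g e n x⟫ := by
  rw [← adj, hAe g e h0 hr]

/-- A (n+1) (e n) = 0 -/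
lemma hAe0 (g e : ℕ → H) (h0 : g 0 = e 0) {n : ℕ} (hr : 0 < n → Rel g e n)
    (hn : ‖e n‖ = 1) : AL g e (n+1) (e n) = 0 := by
  rw [AL_succ, hAe g e h0 hr, inner_self_one hn, one_smul, sub_self]

/-- norm identity step -/
lemma normQ_step (g e : ℕ → H) (h0 : g 0 = e 0) {n : ℕ} (hr : 0 < n → Rel g e n)
    (hn : ‖e n‖ = 1) (x : H) :
    ‖QL g e (n+1) x‖ ^ 2 = ‖QL g e n x‖ ^ 2 - ‖⟪g n, x⟫‖ ^ 2 := by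
  rw [QL_succ]
  rw [@norm_sub_sq ℂ]
  have h1 : ⟪QL g e n x, ⟪g n, x⟫ • e n⟫ = (‖⟪g n, x⟫‖ : ℂ) ^ 2 := by
    have h2 : ⟪QL g e n x, e n⟫ = starRingEnd ℂ ⟪g n, x⟫ := by
      rw [← inner_conj_symm, ← hQg g e h0 hr x]
    rw [inner_smul_right, h2, Complex.mul_conj]
    rw [Complex.normSq_eq_norm_sq]
    push_cast
    norm_num [Complex.sq_norm]
  have h3 : ‖⟪g n, x⟫ • e n‖ = ‖⟪g n, x⟫‖ := by
    rw [norm_smul, hn, mul_one]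
  rw [h1, h3]
  have h4 : RCLike.re ((‖⟪g n, x⟫‖ : ℂ) ^ 2) = ‖⟪g n, x⟫‖ ^ 2 := by
    norm_cast
  rw [h4]; ring



/-- cumulative norm identity -/
lemma normQ (g e : ℕ → H) (h0 : g 0 = e 0) {n : ℕ}
    (hr : ∀ k, 0 < k → k < n → Rel g e k) (hn : ∀ k, k < n → ‖e k‖ = 1) (x : H) :
    (∑ k ∈ range n, ‖⟪g k, x⟫‖ ^ 2) + ‖QL g e n x‖ ^ 2 = ‖x‖ ^ 2 := by
  induction n with
  | zero => simp [QL_zero]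
  | succ n ih =>
    have hstep := normQ_step g e h0 (fun h => hr n h (Nat.lt_succ_self n))
      (hn n (Nat.lt_succ_self n)) x
    rw [Finset.sum_range_succ, hstep]
    have := ih (fun k hk hk' => hr k hk (hk'.trans (Nat.lt_succ_self n)))
      (fun k hk => hn k (hk.trans (Nat.lt_succ_self n)))
    linarith

/-- Bessel bound -/
lemma bound (g e : ℕ → H)
    (hb : ∀ x : H, ∀ s : Finset ℕ, ∑ k ∈ s, ‖⟪g k, x⟫‖ ^ 2 ≤ ‖x‖ ^ 2)
    (h0 : g 0 = e 0) {n : ℕ}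
    (hr : ∀ k, 0 < k → k < n → Rel g e k) (hn : ∀ k, k < n → ‖e k‖ = 1) (x : H) :
    ‖⟪g n, x⟫‖ ≤ ‖QL g e n x‖ := by
  have h1 := hb x (range (n+1))
  rw [Finset.sum_range_succ] at h1
  have h2 := normQ g e h0 hr hn x
  have h3 : ‖⟪g n, x⟫‖ ^ 2 ≤ ‖QL g e n x‖ ^ 2 := by linarith
  have := norm_nonneg (QL g e n x)
  nlinarith [norm_nonneg ⟪g n, x⟫]


/-- vector orthogonal to a set whose span is dense is zero -/
lemma orth_helper {S : Set H} [CompleteSpace H]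
    (hS : (Submodule.span ℂ S).topologicalClosure = ⊤) {x : H}
    (h : ∀ v ∈ S, ⟪v, x⟫ = 0) : x = 0 := by
  have hx : x ∈ (Submodule.span ℂ S)ᗮ := by
    rw [Submodule.mem_orthogonal]
    intro u hu
    induction hu using Submodule.span_induction with
    | mem v hv => exact h v hv
    | zero => simp
    | add a b _ _ ha hb => rw [inner_add_left, ha, hb, add_zero]
    | smul c a _ ha => rw [inner_smul_left, ha, mul_zero]
  rw [Submodule.topologicalClosure_eq_top_iff] at hS
  rw [hS] at hx
  simpa using hx

section FullSeq

variable (g e : ℕ → H)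

/-- Q n (e 0) = 0 for n ≥ 1 -/
lemma Qe0 (h0 : g 0 = e 0) (hrel : ∀ n, 0 < n → Rel g e n)
    (hne : ∀ n, ‖e n‖ = 1) : ∀ n, 1 ≤ n → QL g e n (e 0) = 0 := by
  intro n hn
  induction n with
  | zero => omega
  | succ n ih =>
    rcases Nat.eq_zero_or_pos n with h | h
    · subst h
      rw [QL_succ, QL_zero, ← h0, h0, inner_self_one (h0 ▸ hne 0), one_smul, sub_self]
    · rw [QL_succ, ih h]
      have : ⟪g n, e 0⟫ = 0 := by
        rw [hQg g e h0 (fun hh => hrel n hh), ih h, inner_zero_right]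
      rw [this, zero_smul, sub_zero]

lemma ge0 (h0 : g 0 = e 0) (hrel : ∀ n, 0 < n → Rel g e n)
    (hne : ∀ n, ‖e n‖ = 1) : ∀ n, 1 ≤ n → ⟪g n, (e 0 : H)⟫ = 0 := by
  intro n hn
  rw [hQg g e h0 (fun hh => hrel n hh), Qe0 g e h0 hrel hne n hn, inner_zero_right]

/-- Lemma E: the kernel of Q m is spanned by e 0 -/
lemma lemE [CompleteSpace H] (h0 : g 0 = e 0) (hrel : ∀ n, 0 < n → Rel g e n)
    (hne : ∀ n, ‖e n‖ = 1)
    (hstable : ∀ N : ℕ,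
      (Submodule.span ℂ (insert (g 0) (g '' {n | N ≤ n}))).topologicalClosure = ⊤)
    {m : ℕ} (hm : 1 ≤ m) {x : H} (hx : QL g e m x = 0) :
    x = ⟪g 0, x⟫ • e 0 := by
  set x' := x - ⟪g 0, x⟫ • e 0 with hx'def
  have hQx' : QL g e m x' = 0 := by
    rw [hx'def, map_sub, map_smul, hx, Qe0 g e h0 hrel hne m hm, smul_zero, sub_self]
  have hQj : ∀ j, m ≤ j → QL g e j x' = 0 := by
    intro j hj
    induction j, hj using Nat.le_induction with
    | base => exact hQx'
    | succ j hj ih =>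
      rw [QL_succ, ih]
      rw [hQg g e h0 (fun hh => hrel j hh), ih, inner_zero_right, zero_smul, sub_zero]
  have hgj : ∀ j, m ≤ j → ⟪g j, x'⟫ = 0 := by
    intro j hj
    rw [hQg g e h0 (fun hh => hrel j hh), hQj j hj, inner_zero_right]
  have hg0' : ⟪g 0, x'⟫ = 0 := by
    rw [hx'def, inner_sub_right, inner_smul_right, h0,
      inner_self_one (h0 ▸ hne 0)]
    ring
  have hzero : x' = 0 := by
    refine orth_helper (hstable m) ?_
    intro v hv
    rcases hv with h | h
    · subst h; exact hg0'
    · rcases h with ⟨j, hj, rfl⟩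
      exact hgj j hj
  have : x - ⟪g 0, x⟫ • e 0 = 0 := hzero
  linear_combination (norm := module) this


open Module in
/-- Kernel lemma: ker (A (n+1)) = ℂ e n -/
lemma KL [CompleteSpace H] (h0 : g 0 = e 0) (hrel : ∀ k, 0 < k → Rel g e k)
    (hne : ∀ k, ‖e k‖ = 1)
    (hstable : ∀ N : ℕ,
      (Submodule.span ℂ (insert (g 0) (g '' {k | N ≤ k}))).topologicalClosure = ⊤)
    (n : ℕ) {y : H} (hy : AL g e (n+1) y = 0) : ∃ c : ℂ, y = c • e n := by
  set m := n + 1 with hm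
  classical
  set S : Set H := (e '' {k | k < m}) ∪ (g '' {k | k < m}) with hS
  have hSfin : S.Finite :=
    ((Set.finite_Iio m).image e).union ((Set.finite_Iio m).image g)
  set U : Submodule ℂ H := Submodule.span ℂ S with hU
  haveI : FiniteDimensional ℂ U := FiniteDimensional.span_of_finite ℂ hSfin
  have heU : ∀ k, k < m → e k ∈ U := fun k hk =>
    Submodule.subset_span (Or.inl ⟨k, hk, rfl⟩)
  have hgU : ∀ k, k < m → g k ∈ U := fun k hk =>
    Submodule.subset_span (Or.inr ⟨k, hk, rfl⟩)
  have hQU : ∀ x ∈ U, QL g e m x ∈ U := by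
    intro x hx
    rw [QL_apply]
    exact Submodule.sub_mem _ hx (Submodule.sum_mem _ fun k hk =>
      Submodule.smul_mem _ _ (heU k (mem_range.mp hk)))
  have hAU : ∀ x ∈ U, AL g e m x ∈ U := by
    intro x hx
    rw [AL_apply]
    exact Submodule.sub_mem _ hx (Submodule.sum_mem _ fun k hk =>
      Submodule.smul_mem _ _ (hgU k (mem_range.mp hk)))
  set TQ : U →ₗ[ℂ] U := (QL g e m).restrict hQU with hTQ
  set TA : U →ₗ[ℂ] U := (AL g e m).restrict hAU with hTA
  have hTQcoe : ∀ u : U, (TQ u : H) = QL g e m (u : H) := fun u => rfl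
  have hTAcoe : ∀ u : U, (TA u : H) = AL g e m (u : H) := fun u => rfl
  have he0U : e 0 ∈ U := heU 0 (Nat.succ_pos n)
  set e0elt : U := ⟨e 0, he0U⟩ with he0elt
  -- ker TQ ≤ span {e0elt}
  have hkerTQ : LinearMap.ker TQ ≤ Submodule.span ℂ {e0elt} := by
    intro u hu
    have h1 : QL g e m (u : H) = 0 := by
      have := congrArg (Subtype.val) (LinearMap.mem_ker.mp hu)
      simpa [hTQcoe] using this
    have h2 := lemE g e h0 hrel hne hstable (Nat.succ_pos n) h1
    rw [Submodule.mem_span_singleton]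
    refine ⟨⟪g 0, (u : H)⟫, Subtype.ext ?_⟩
    rw [Submodule.coe_smul]
    exact h2.symm
  -- adjointness
  have hadj : ∀ u v : U, ⟪TA u, v⟫ = ⟪u, TQ v⟫ := by
    intro u v
    rw [Submodule.coe_inner, Submodule.coe_inner, hTAcoe, hTQcoe]
    exact adj g e m _ _
  -- ker TA = (range TQ)ᗮ
  have hker_eq : LinearMap.ker TA = (LinearMap.range TQ)ᗮ := by
    ext u
    constructor
    · intro hu
      rw [Submodule.mem_orthogonal]
      rintro v ⟨w, rfl⟩
      rw [← inner_conj_symm, ← hadj, LinearMap.mem_ker.mp hu, inner_zero_left, map_zero]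
    · intro hu
      rw [LinearMap.mem_ker]
      have h3 : ∀ v : U, ⟪TA u, v⟫ = 0 := by
        intro v
        rw [hadj, ← inner_conj_symm]
        rw [Submodule.mem_orthogonal] at hu
        rw [hu (TQ v) ⟨v, rfl⟩, map_zero]
      have := h3 (TA u)
      exact inner_self_eq_zero.mp this
  -- dimension count
  have hd1 : finrank ℂ (LinearMap.range TQ) + finrank ℂ ((LinearMap.range TQ)ᗮ)
      = finrank ℂ U := Submodule.finrank_add_finrank_orthogonal _
  have hd2 : finrank ℂ (LinearMap.range TQ) + finrank ℂ (LinearMap.ker TQ)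
      = finrank ℂ U := LinearMap.finrank_range_add_finrank_ker TQ
  have he0ne : e0elt ≠ 0 := by
    intro hcon
    have h4 : (e 0 : H) = 0 := congrArg Subtype.val hcon
    have h5 := hne 0
    rw [h4] at h5
    simp at h5
  have hdim_span : finrank ℂ (Submodule.span ℂ {e0elt}) = 1 :=
    finrank_span_singleton he0ne
  have hkerTQ_le : finrank ℂ (LinearMap.ker TQ) ≤ 1 := by
    have := Submodule.finrank_mono hkerTQ
    omega
  have hkerTA_le : finrank ℂ (LinearMap.ker TA) ≤ 1 := by
    rw [hker_eq]; omega
  -- e n ∈ ker TA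
  have henU : e n ∈ U := heU n (Nat.lt_succ_self n)
  set enelt : U := ⟨e n, henU⟩ with henelt
  have henker : enelt ∈ LinearMap.ker TA := by
    rw [LinearMap.mem_ker]
    apply Subtype.ext
    rw [hTAcoe]
    exact hAe0 g e h0 (fun hh => hrel n hh) (hne n)
  have henne : enelt ≠ 0 := by
    intro hcon
    have : (e n : H) = 0 := congrArg Subtype.val hcon
    have h5 := hne n
    rw [this] at h5
    simp at h5
  have hspan_le : Submodule.span ℂ {enelt} ≤ LinearMap.ker TA := by
    rw [Submodule.span_singleton_le_iff_mem]; exact henker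
  have heq : Submodule.span ℂ {enelt} = LinearMap.ker TA := by
    apply Submodule.eq_of_le_of_finrank_le hspan_le
    rw [finrank_span_singleton henne]
    exact hkerTA_le
  -- y ∈ U
  have hyU : y ∈ U := by
    have h6 : y = ∑ k ∈ range m, ⟪e k, y⟫ • g k := by
      have := hy
      rw [AL_apply] at this
      have h7 : y - ∑ k ∈ range m, ⟪e k, y⟫ • g k = 0 := this
      linear_combination (norm := module) h7
    rw [h6]
    exact Submodule.sum_mem _ fun k hk =>
      Submodule.smul_mem _ _ (hgU k (mem_range.mp hk))
  have hymem : (⟨y, hyU⟩ : U) ∈ LinearMap.ker TA := by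
    rw [LinearMap.mem_ker]
    apply Subtype.ext
    rw [hTAcoe]
    exact hy
  rw [← heq, Submodule.mem_span_singleton] at hymem
  obtain ⟨c, hc⟩ := hymem
  exact ⟨c, by have := congrArg Subtype.val hc; exact this.symm⟩


/-- surjectivity: every z decomposes as Q (n+1) x + c • e n -/
lemma Vtop [CompleteSpace H] (h0 : g 0 = e 0) (hrel : ∀ k, 0 < k → Rel g e k)
    (hne : ∀ k, ‖e k‖ = 1)
    (hstable : ∀ N : ℕ,
      (Submodule.span ℂ (insert (g 0) (g '' {k | N ≤ k}))).topologicalClosure = ⊤)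
    (n : ℕ) (z : H) : ∃ x : H, ∃ c : ℂ, z = QL g e (n+1) x + c • e n := by
  classical
  set m := n + 1 with hm
  set S : Set H := (e '' {k | k < m}) ∪ (g '' {k | k < m}) with hS
  have hSfin : S.Finite :=
    ((Set.finite_Iio m).image e).union ((Set.finite_Iio m).image g)
  set U : Submodule ℂ H := Submodule.span ℂ S with hU
  haveI : FiniteDimensional ℂ U := FiniteDimensional.span_of_finite ℂ hSfin
  have heU : ∀ k, k < m → e k ∈ U := fun k hk =>
    Submodule.subset_span (Or.inl ⟨k, hk, rfl⟩)
  have hgU : ∀ k, k < m → g k ∈ U := fun k hk =>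
    Submodule.subset_span (Or.inr ⟨k, hk, rfl⟩)
  have hQU : ∀ x ∈ U, QL g e m x ∈ U := by
    intro x hx
    rw [QL_apply]
    exact Submodule.sub_mem _ hx (Submodule.sum_mem _ fun k hk =>
      Submodule.smul_mem _ _ (heU k (mem_range.mp hk)))
  have henU : e n ∈ U := heU n (Nat.lt_succ_self n)
  set F : Submodule ℂ H := (Submodule.map (QL g e m) U) ⊔ (Submodule.span ℂ {e n})
    with hF
  have hFU : F ≤ U := by
    apply sup_le
    · rintro _ ⟨x, hx, rfl⟩
      exact hQU x hx
    · rw [Submodule.span_singleton_le_iff_mem]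
      exact henU
  haveI : FiniteDimensional ℂ F := Submodule.finiteDimensional_of_le hFU
  -- Q acts as identity on Uᗮ
  have hQid : ∀ w ∈ Uᗮ, QL g e m w = w := by
    intro w hw
    rw [QL_apply]
    have : ∀ k ∈ range m, ⟪g k, w⟫ • e k = 0 := by
      intro k hk
      rw [(Submodule.mem_orthogonal U w).mp hw (g k) (hgU k (mem_range.mp hk)),
        zero_smul]
    rw [Finset.sum_congr rfl this]
    simp
  -- main claim: U ∩ Fᗮ = 0
  have claim0 : ∀ w, w ∈ U → w ∈ Fᗮ → w = 0 := by
    intro w hwU hwF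
    have hAw : AL g e m w = 0 := by
      have hall : ∀ x, ⟪AL g e m w, x⟫ = 0 := by
        intro x
        rw [adj]
        have hx : x = (Submodule.orthogonalProjectionOnto U x : H) + (x - Submodule.orthogonalProjectionOnto U x) := by
          abel
        set p : H := (Submodule.orthogonalProjectionOnto U x : H) with hp
        have hq : x - p ∈ Uᗮ := Submodule.sub_starProjection_mem_orthogonal (K := U) x
        have h1 : QL g e m x = QL g e m p + (x - p) := by
          conv_lhs => rw [hx]
          rw [map_add, hQid _ hq]
        rw [h1, inner_add_right]
        have h2 : ⟪w, QL g e m p⟫ = 0 := by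
          rw [← inner_conj_symm]
          rw [(Submodule.mem_orthogonal F w).mp hwF (QL g e m p)
            (Submodule.mem_sup_left (Submodule.mem_map_of_mem
              (SetLike.coe_mem (Submodule.orthogonalProjectionOnto U x)))), map_zero]
        have h3 : ⟪w, x - p⟫ = 0 :=
          (Submodule.mem_orthogonal U (x - p)).mp hq w hwU
        rw [h2, h3, add_zero]
      have := hall (AL g e m w)
      exact inner_self_eq_zero.mp this
    obtain ⟨c, hc⟩ := KL g e h0 hrel hne hstable n hAw
    have hen : ⟪e n, w⟫ = 0 :=
      (Submodule.mem_orthogonal F w).mp hwF (e n)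
        (Submodule.mem_sup_right (Submodule.mem_span_singleton_self _))
    rw [hc, inner_smul_right, inner_self_one (hne n), mul_one] at hen
    rw [hc, hen, zero_smul]
  -- U ≤ F
  have claim1 : U ≤ F := by
    intro u hu
    set pf : H := (Submodule.orthogonalProjectionOnto F u : H) with hpf
    have hq : u - pf ∈ Fᗮ := Submodule.sub_starProjection_mem_orthogonal (K := F) u
    have hqU : u - pf ∈ U :=
      Submodule.sub_mem _ hu (hFU (SetLike.coe_mem (Submodule.orthogonalProjectionOnto F u)))
    have h0' : u - pf = 0 := claim0 _ hqU hq
    have : u = pf := by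
      have := h0'
      linear_combination (norm := module) this
    rw [this]
    exact SetLike.coe_mem (Submodule.orthogonalProjectionOnto F u)
  -- decompose z
  set p : H := (Submodule.orthogonalProjectionOnto U z : H) with hpz
  have hq : z - p ∈ Uᗮ := Submodule.sub_starProjection_mem_orthogonal (K := U) z
  have hpF : p ∈ F := claim1 (SetLike.coe_mem (Submodule.orthogonalProjectionOnto U z))
  rw [Submodule.mem_sup] at hpF
  obtain ⟨a, ha, b, hb, hab⟩ := hpF
  obtain ⟨x₁, hx₁U, rfl⟩ := ha
  rw [Submodule.mem_span_singleton] at hb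
  obtain ⟨c, rfl⟩ := hb
  refine ⟨x₁ + (z - p), c, ?_⟩
  rw [map_add, hQid _ hq]
  have hz : z = p + (z - p) := by abel
  conv_lhs => rw [hz]
  rw [← hab]
  abel


/-- stability of e -/
lemma stab [CompleteSpace H] (h0 : g 0 = e 0) (hrel : ∀ k, 0 < k → Rel g e k)
    (hne : ∀ k, ‖e k‖ = 1)
    (hstable : ∀ N : ℕ,
      (Submodule.span ℂ (insert (g 0) (g '' {k | N ≤ k}))).topologicalClosure = ⊤)
    (N : ℕ) : (Submodule.span ℂ (e '' {k | N ≤ k})).topologicalClosure = ⊤ := by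
  rw [Submodule.topologicalClosure_eq_top_iff]
  rw [Submodule.eq_bot_iff]
  intro z hz
  have hze : ∀ k, N ≤ k → ⟪e k, z⟫ = 0 := fun k hk =>
    (Submodule.mem_orthogonal _ z).mp hz (e k) (Submodule.subset_span ⟨k, hk, rfl⟩)
  obtain ⟨x, c, hzx⟩ := Vtop g e h0 hrel hne hstable N z
  have h1 : ⟪e N, QL g e (N+1) x⟫ = 0 := by
    rw [← adj, hAe0 g e h0 (fun hh => hrel N hh) (hne N), inner_zero_left]
  have hc : c = 0 := by
    have h2 := hze N le_rfl
    rw [hzx, inner_add_right, h1, inner_smul_right, inner_self_one (hne N),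
      mul_one, zero_add] at h2
    exact h2
  rw [hc, zero_smul, add_zero] at hzx
  have key : ∀ j, N + 1 ≤ j → QL g e j x = z := by
    intro j hj
    induction j, hj using Nat.le_induction with
    | base => exact hzx.symm
    | succ j hj ih =>
      rw [QL_succ, ih]
      have h3 : ⟪g j, x⟫ = 0 := by
        rw [hQg g e h0 (fun hh => hrel j hh), ih, hze j (by omega)]
      rw [h3, zero_smul, sub_zero]
  have hgjx : ∀ j, N + 1 ≤ j → ⟪g j, x⟫ = 0 := by
    intro j hj
    rw [hQg g e h0 (fun hh => hrel j hh), key j hj, hze j (by omega)]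
  set x' : H := x - ⟪g 0, x⟫ • e 0 with hx'
  have hg0x' : ⟪g 0, x'⟫ = 0 := by
    rw [hx', inner_sub_right, inner_smul_right, h0, inner_self_one (h0 ▸ hne 0)]
    ring
  have hgjx' : ∀ j, N + 1 ≤ j → ⟪g j, x'⟫ = 0 := by
    intro j hj
    rw [hx', inner_sub_right, inner_smul_right, hgjx j hj,
      ge0 g e h0 hrel hne j (by omega)]
    ring
  have hx'0 : x' = 0 := by
    refine orth_helper (hstable (N+1)) ?_
    intro v hv
    rcases hv with h | h
    · subst h; exact hg0x'
    · rcases h with ⟨j, hj, rfl⟩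
      exact hgjx' j hj
  have hxe : x = ⟪g 0, x⟫ • e 0 := by
    have := hx'0
    rw [hx'] at this
    linear_combination (norm := module) this
  rw [hzx, hxe, map_smul, Qe0 g e h0 hrel hne (N+1) (by omega), smul_zero]


/-- uniqueness of admissible sequences -/
lemma uniq [CompleteSpace H] (e' : ℕ → H)
    (h0 : g 0 = e 0) (hrel : ∀ k, 0 < k → Rel g e k) (hne : ∀ k, ‖e k‖ = 1)
    (hadm : ∀ k : ℕ, ∃ r : ℝ, 0 ≤ r ∧ ⟪e k, e (k+1)⟫ = (r : ℂ))
    (h0' : g 0 = e' 0) (hrel' : ∀ k, 0 < k → Rel g e' k) (hne' : ∀ k, ‖e' k‖ = 1)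
    (hadm' : ∀ k : ℕ, ∃ r : ℝ, 0 ≤ r ∧ ⟪e' k, e' (k+1)⟫ = (r : ℂ))
    (hstable : ∀ N : ℕ,
      (Submodule.span ℂ (insert (g 0) (g '' {k | N ≤ k}))).topologicalClosure = ⊤) :
    e = e' := by
  funext n
  induction n using Nat.strong_induction_on with
  | _ n ih =>
    match n, ih with
    | 0, _ => rw [← h0, ← h0']
    | (j+1), ih =>
      have hij : e j = e' j := ih j (Nat.lt_succ_self j)
      have hAeq : AL g e (j+1) = AL g e' (j+1) := by
        unfold AL
        congr 1
        refine Finset.sum_congr rfl fun k hk => ?_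
        rw [ih k (mem_range.mp hk)]
      have hA1 : AL g e (j+1) (e (j+1)) = g (j+1) :=
        hAe g e h0 (fun _ => hrel (j+1) (Nat.succ_pos j))
      have hA2 : AL g e (j+1) (e' (j+1)) = g (j+1) := by
        rw [hAeq]
        exact hAe g e' h0' (fun _ => hrel' (j+1) (Nat.succ_pos j))
      have hd : AL g e (j+1) (e (j+1) - e' (j+1)) = 0 := by
        rw [map_sub, hA1, hA2, sub_self]
      obtain ⟨c, hc⟩ := KL g e h0 hrel hne hstable j hd
      obtain ⟨r, hr0, hre⟩ := hadm j
      obtain ⟨r', hr'0, hre'⟩ := hadm' j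
      have hre'' : ⟪e j, e' (j+1)⟫ = (r' : ℂ) := by rw [hij]; exact hre'
      have hcc : c = ((r - r' : ℝ) : ℂ) := by
        have h5 : ⟪e j, e (j+1) - e' (j+1)⟫ = c := by
          rw [hc, inner_smul_right, inner_self_one (hne j), mul_one]
        rw [inner_sub_right, hre, hre''] at h5
        rw [← h5]
        push_cast
        ring
      set t : ℝ := r - r' with ht
      have hc2 : e (j+1) - e' (j+1) = (t : ℂ) • e j := by rw [hc, hcc]
      have he'j : e' (j+1) = e (j+1) - (t : ℂ) • e j := by
        have := hc2
        linear_combination (norm := module) -this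
      have hej : e (j+1) = e' (j+1) + (t : ℂ) • e j := by
        have := hc2
        linear_combination (norm := module) this
      -- first norm equation
      have heq1 : t ^ 2 = 2 * t * r := by
        have h6 : ‖e' (j+1)‖ ^ 2 = 1 := by rw [hne' (j+1)]; norm_num
        rw [he'j, @norm_sub_sq ℂ] at h6
        have h7 : ⟪e (j+1), (t : ℂ) • e j⟫ = ((t * r : ℝ) : ℂ) := by
          rw [inner_smul_right, ← inner_conj_symm (e (j+1)) (e j), hre]
          push_cast
          simp [Complex.conj_ofReal]
        rw [h7] at h6
        have h8 : ‖(t : ℂ) • e j‖ ^ 2 = t ^ 2 := by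
          rw [norm_smul, hne j, mul_one, Complex.norm_real]
          exact sq_abs t
        rw [h8, hne (j+1)] at h6
        have h9 : RCLike.re (((t * r : ℝ) : ℂ)) = t * r := by
          simp
        rw [h9] at h6
        nlinarith
      -- second norm equation
      have heq2 : t ^ 2 = -(2 * t * r') := by
        have h6 : ‖e (j+1)‖ ^ 2 = 1 := by rw [hne (j+1)]; norm_num
        rw [hej, @norm_add_sq ℂ] at h6
        have h7 : ⟪e' (j+1), (t : ℂ) • e j⟫ = ((t * r' : ℝ) : ℂ) := by
          rw [inner_smul_right, ← inner_conj_symm (e' (j+1)) (e j), hre'']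
          push_cast
          simp [Complex.conj_ofReal]
        rw [h7] at h6
        have h8 : ‖(t : ℂ) • e j‖ ^ 2 = t ^ 2 := by
          rw [norm_smul, hne j, mul_one, Complex.norm_real]
          exact sq_abs t
        rw [h8, hne' (j+1)] at h6
        have h9 : RCLike.re (((t * r' : ℝ) : ℂ)) = t * r' := by
          simp
        rw [h9] at h6
        nlinarith
      have hsum : t * (r + r') = 0 := by linear_combination (heq2 - heq1) / 2
      have ht0 : t = 0 := by
        rcases mul_eq_zero.mp hsum with h | h
        · exact h
        · have hr : r = 0 := by linarith
          have hsq : t ^ 2 = 0 := by rw [heq1, hr]; ring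
          exact pow_eq_zero_iff (two_ne_zero) |>.mp hsq
      have : e (j+1) - e' (j+1) = 0 := by
        rw [hc2, ht0]
        simp
      linear_combination (norm := module) this

end FullSeq


/-- prefix property -/
def Good (g : ℕ → H) (n : ℕ) (v : ℕ → H) : Prop :=
  g 0 = v 0 ∧ (∀ k, k ≤ n → ‖v k‖ = 1) ∧
  (∀ k, 0 < k → k ≤ n → Rel g v k) ∧
  (∀ k, k + 1 ≤ n → ∃ r : ℝ, 0 ≤ r ∧ ⟪v k, v (k+1)⟫ = (r : ℂ))

lemma rel_congr (g v w : ℕ → H) (k : ℕ) (hvw : ∀ i, i ≤ k → w i = v i)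
    (h : Rel g v k) : Rel g w k := by
  unfold Rel at h ⊢
  rw [hvw k le_rfl]
  rw [h]
  congr 1
  refine Finset.sum_congr rfl fun i hi => ?_
  rw [hvw i (le_of_lt (mem_range.mp hi))]

lemma good_zero (g : ℕ → H) (hnorm : ‖g 0‖ = 1) : Good g 0 (fun _ => g 0) := by
  refine ⟨rfl, fun k hk => ?_, fun k hk hk' => by omega, fun k hk => by omega⟩
  interval_cases k
  exact hnorm


lemma riesz_bound {E : Type*} [NormedAddCommGroup E] [InnerProductSpace ℂ E]
    [FiniteDimensional ℂ E] (T : E →ₗ[ℂ] E) (ψ : E →ₗ[ℂ] ℂ)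
    (hbd : ∀ x, ‖ψ x‖ ≤ ‖T x‖) :
    ∃ u : E, ‖u‖ ≤ 1 ∧ ∀ x, (⟪u, T x⟫ : ℂ) = ψ x := by
  classical
  haveI : CompleteSpace E := FiniteDimensional.complete ℂ E
  have hker : LinearMap.ker T ≤ LinearMap.ker ψ := by
    intro x hx
    have h1 : T x = 0 := LinearMap.mem_ker.mp hx
    have h2 := hbd x
    rw [h1, norm_zero] at h2
    exact LinearMap.mem_ker.mpr (norm_le_zero_iff.mp h2)
  set ρ₀ : LinearMap.range T →ₗ[ℂ] ℂ :=
    ((LinearMap.ker T).liftQ ψ hker).comp T.quotKerEquivRange.symm.toLinearMap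
    with hρ₀
  have hρap : ∀ (x : E) (h : T x ∈ LinearMap.range T), ρ₀ ⟨T x, h⟩ = ψ x := by
    intro x h
    rw [hρ₀, LinearMap.comp_apply, LinearEquiv.coe_toLinearMap,
      LinearMap.quotKerEquivRange_symm_apply_image T x h, Submodule.mkQ_apply,
      Submodule.liftQ_apply]
  haveI : CompleteSpace (LinearMap.range T) := FiniteDimensional.complete ℂ _
  set ρ : LinearMap.range T →L[ℂ] ℂ := LinearMap.toContinuousLinearMap ρ₀ with hρ
  set u₀ : LinearMap.range T := (InnerProductSpace.toDual ℂ _).symm ρ with hu₀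
  have hrepr : ∀ r : LinearMap.range T, (⟪u₀, r⟫ : ℂ) = ρ r := fun r =>
    InnerProductSpace.toDual_symm_apply
  have hrepr' : ∀ (x : E) (h : T x ∈ LinearMap.range T),
      (⟪(u₀ : E), T x⟫ : ℂ) = ψ x := by
    intro x h
    have h1 : (⟪(u₀ : E), T x⟫ : ℂ) = ⟪u₀, (⟨T x, h⟩ : LinearMap.range T)⟫ := rfl
    rw [h1, hrepr]
    have h2 : ρ (⟨T x, h⟩ : LinearMap.range T) = ρ₀ ⟨T x, h⟩ := by
      rw [hρ]; simp
    rw [h2, hρap]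
  refine ⟨(u₀ : E), ?_, fun x => hrepr' x ⟨x, rfl⟩⟩
  obtain ⟨x₀, hx₀⟩ := u₀.2
  have h1 : (⟪(u₀ : E), (u₀ : E)⟫ : ℂ) = ψ x₀ := by
    have h0' := hrepr' x₀ ⟨x₀, rfl⟩
    rw [hx₀] at h0'
    exact h0'
  have h2 : (⟪(u₀ : E), (u₀ : E)⟫ : ℂ) = (‖(u₀ : E)‖ : ℂ) ^ 2 :=
    inner_self_eq_norm_sq_to_K _
  have h3 : ‖(u₀ : E)‖ ^ 2 = ‖ψ x₀‖ := by
    rw [← h1, h2]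
    norm_num
  have h4 : ‖ψ x₀‖ ≤ ‖T x₀‖ := hbd x₀
  have h5 : ‖T x₀‖ = ‖(u₀ : E)‖ := by rw [hx₀]
  have h6 : ‖(u₀ : E)‖ ^ 2 ≤ ‖(u₀ : E)‖ := by rw [h3, ← h5]; exact h4
  nlinarith [norm_nonneg (u₀ : E)]

lemma step_exists [CompleteSpace H] (g : ℕ → H)
    (hb : ∀ x : H, ∀ s : Finset ℕ, ∑ k ∈ s, ‖⟪g k, x⟫‖ ^ 2 ≤ ‖x‖ ^ 2)
    (n : ℕ) (v : ℕ → H) (hG : Good g n v) :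
    ∃ w : ℕ → H, Good g (n+1) w ∧ ∀ k, k ≤ n → w k = v k := by
  classical
  obtain ⟨h0, hnorms, hrels, hadms⟩ := hG
  set m := n + 1 with hm
  have hr : ∀ k, 0 < k → k < m → Rel g v k := fun k hk hk' => hrels k hk (by omega)
  have hn1 : ∀ k, k < m → ‖v k‖ = 1 := fun k hk => hnorms k (by omega)
  have hbd : ∀ x : H, ‖⟪g m, x⟫‖ ≤ ‖QL g v m x‖ := fun x =>
    bound g v hb h0 hr hn1 x
  -- finite dimensional setup
  set S : Set H := (v '' {k | k < m}) ∪ (g '' {k | k ≤ m}) with hS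
  have hSfin : S.Finite :=
    ((Set.finite_Iio m).image v).union ((Set.finite_Iic m).image g)
  set U : Submodule ℂ H := Submodule.span ℂ S with hU
  haveI : FiniteDimensional ℂ U := FiniteDimensional.span_of_finite ℂ hSfin
  haveI : CompleteSpace U := FiniteDimensional.complete ℂ U
  have heU : ∀ k, k < m → v k ∈ U := fun k hk =>
    Submodule.subset_span (Or.inl ⟨k, hk, rfl⟩)
  have hgU : ∀ k, k ≤ m → g k ∈ U := fun k hk =>
    Submodule.subset_span (Or.inr ⟨k, hk, rfl⟩)
  have hQU : ∀ x ∈ U, QL g v m x ∈ U := by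
    intro x hx
    rw [QL_apply]
    exact Submodule.sub_mem _ hx (Submodule.sum_mem _ fun k hk =>
      Submodule.smul_mem _ _ (heU k (mem_range.mp hk)))
  set TQ : U →ₗ[ℂ] U := (QL g v m).restrict hQU with hTQ
  have hTQcoe : ∀ u : U, (TQ u : H) = QL g v m (u : H) := fun u => rfl
  set ψ : U →ₗ[ℂ] ℂ := ((innerSL ℂ (g m)).toLinearMap).comp U.subtype with hψ
  have hψap : ∀ u : U, ψ u = ⟪g m, (u : H)⟫ := fun u => rfl
  have hbd2 : ∀ u : U, ‖ψ u‖ ≤ ‖TQ u‖ := by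
    intro u
    rw [hψap]
    have := hbd (u : H)
    rw [← hTQcoe] at this
    exact this
  obtain ⟨u₀, hu₀norm, hu₀inner⟩ := riesz_bound TQ ψ hbd2
  set uH : H := (u₀ : H) with huH
  have hcoe_norm : ‖uH‖ = ‖u₀‖ := rfl
  have hinner_uH : ∀ u : U, ⟪uH, (TQ u : H)⟫ = ⟪g m, (u : H)⟫ := by
    intro u
    have h1 : ⟪uH, (TQ u : H)⟫ = (⟪u₀, TQ u⟫ : ℂ) := rfl
    rw [h1, hu₀inner, hψap]
  have hnorm_uH : ‖uH‖ ≤ 1 := hu₀norm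
  -- A uH = g m
  have hQid : ∀ w ∈ Uᗮ, QL g v m w = w := by
    intro w hw
    rw [QL_apply]
    have : ∀ k ∈ range m, ⟪g k, w⟫ • v k = 0 := by
      intro k hk
      rw [(Submodule.mem_orthogonal U w).mp hw (g k)
        (hgU k (le_of_lt (mem_range.mp hk))), zero_smul]
    rw [Finset.sum_congr rfl this]
    simp
  have hkey : ∀ x : H, ⟪uH, QL g v m x⟫ = ⟪g m, x⟫ := by
    intro x
    set p : U := Submodule.orthogonalProjectionOnto U x with hp
    have hq : x - (p : H) ∈ Uᗮ := Submodule.sub_starProjection_mem_orthogonal (K := U) x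
    have hx : x = (p : H) + (x - (p : H)) := by abel
    have h1 : QL g v m x = (TQ p : H) + (x - (p : H)) := by
      conv_lhs => rw [hx]
      rw [map_add, hQid _ hq, hTQcoe]
    rw [h1, inner_add_right, hinner_uH p]
    have h2 : ⟪uH, x - (p : H)⟫ = 0 :=
      (Submodule.mem_orthogonal U _).mp hq uH (SetLike.coe_mem (u₀ : U))
    have h3 : ⟪g m, x⟫ = ⟪g m, (p : H)⟫ + ⟪g m, x - (p : H)⟫ := by
      rw [← inner_add_right, ← hx]
    have h4 : ⟪g m, x - (p : H)⟫ = 0 :=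
      (Submodule.mem_orthogonal U _).mp hq (g m) (hgU m le_rfl)
    rw [h2, add_zero, h3, h4, add_zero]
  have hAuH : AL g v m uH = g m := by
    have hall : ∀ x, ⟪AL g v m uH - g m, x⟫ = 0 := by
      intro x
      rw [inner_sub_left, adj, hkey, sub_self]
    have := hall (AL g v m uH - g m)
    have h5 : AL g v m uH - g m = 0 := inner_self_eq_zero.mp this
    linear_combination (norm := module) h5
  -- adjustment
  set epre : H := v n with hepre
  have hApre : AL g v m epre = 0 :=
    hAe0 g v h0 (fun hh => hrels n hh le_rfl) (hnorms n le_rfl)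
  set a : ℂ := ⟪epre, uH⟫ with ha
  set f : H := uH - a • epre with hf
  have hepre_norm : ‖epre‖ = 1 := hnorms n le_rfl
  have hfperp : ⟪epre, f⟫ = 0 := by
    rw [hf, inner_sub_right, inner_smul_right, inner_self_one hepre_norm, mul_one,
      sub_self]
  have hfperp' : ⟪f, epre⟫ = 0 := by
    rw [← inner_conj_symm f epre, hfperp, map_zero]
  have hfnorm : ‖f‖ ^ 2 ≤ 1 := by
    have huHf : uH = f + a • epre := by rw [hf]; abel
    have h1 : ‖uH‖ ^ 2 = ‖f‖ ^ 2 + 2 * RCLike.re ⟪f, a • epre⟫ + ‖a • epre‖ ^ 2 := by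
      rw [huHf, @norm_add_sq ℂ]
    have h2 : ⟪f, a • epre⟫ = 0 := by rw [inner_smul_right, hfperp', mul_zero]
    rw [h2] at h1
    simp only [map_zero, mul_zero, add_zero] at h1
    nlinarith [norm_nonneg (a • epre), norm_nonneg uH, sq_nonneg (‖a • epre‖)]
  set sr : ℝ := Real.sqrt (1 - ‖f‖ ^ 2) with hsr
  have hs0 : 0 ≤ sr := Real.sqrt_nonneg _
  have hs2 : sr ^ 2 = 1 - ‖f‖ ^ 2 := Real.sq_sqrt (by linarith)
  set newe : H := f + (sr : ℂ) • epre with hnewe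
  have hnew_norm : ‖newe‖ = 1 := by
    have h1 : ‖newe‖ ^ 2 = ‖f‖ ^ 2 + 2 * RCLike.re ⟪f, (sr : ℂ) • epre⟫
        + ‖(sr : ℂ) • epre‖ ^ 2 := by
      rw [hnewe, @norm_add_sq ℂ]
    have h2 : ⟪f, (sr : ℂ) • epre⟫ = 0 := by
      rw [inner_smul_right, hfperp', mul_zero]
    have h3 : ‖(sr : ℂ) • epre‖ ^ 2 = sr ^ 2 := by
      rw [norm_smul, hepre_norm, mul_one, Complex.norm_real]
      exact sq_abs sr
    rw [h2, h3] at h1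
    simp only [map_zero, mul_zero, add_zero] at h1
    have h4 : ‖newe‖ ^ 2 = 1 := by rw [h1, hs2]; ring
    nlinarith [norm_nonneg newe]
  have hAnew : AL g v m newe = g m := by
    rw [hnewe, hf, map_add, map_sub, map_smul, map_smul, hAuH, hApre, smul_zero,
      smul_zero, sub_zero, add_zero]
  have hinner_new : ⟪epre, newe⟫ = ((sr : ℝ) : ℂ) := by
    rw [hnewe, inner_add_right, hfperp, inner_smul_right, inner_self_one hepre_norm,
      mul_one, zero_add]
  -- define w
  set w : ℕ → H := Function.update v m newe with hw
  have hwk : ∀ k, k ≤ n → w k = v k := by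
    intro k hk
    rw [hw]
    exact Function.update_of_ne (by omega) _ _
  have hwm : w m = newe := by rw [hw]; exact Function.update_self _ _ _
  refine ⟨w, ⟨?_, ?_, ?_, ?_⟩, hwk⟩
  · rw [hwk 0 (Nat.zero_le n)]; exact h0
  · intro k hk
    rcases Nat.lt_succ_iff_lt_or_eq.mp (Nat.lt_succ_of_le hk) with h | h
    · rw [hwk k (by omega)]; exact hnorms k (by omega)
    · rw [h, hwm]; exact hnew_norm
  · intro k hk hk'
    rcases Nat.lt_succ_iff_lt_or_eq.mp (Nat.lt_succ_of_le hk') with h | h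
    · exact rel_congr g v w k (fun i hi => hwk i (by omega)) (hrels k hk (by omega))
    · subst h
      unfold Rel
      have h1 : g m = newe - ∑ i ∈ range m, ⟪v i, newe⟫ • g i := by
        rw [← AL_apply, hAnew]
      rw [hwm, h1]
      congr 1
      refine Finset.sum_congr rfl fun i hi => ?_
      rw [hwk i (by have := mem_range.mp hi; omega)]
  · intro k hk
    rcases Nat.lt_succ_iff_lt_or_eq.mp (Nat.lt_succ_of_le hk) with h | h
    · obtain ⟨r, hr0, hrr⟩ := hadms k (by omega)
      exact ⟨r, hr0, by rw [hwk k (by omega), hwk (k+1) (by omega)]; exact hrr⟩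
    · have hkn : k = n := by omega
      subst hkn
      refine ⟨sr, hs0, ?_⟩
      rw [hwk k le_rfl, hwm]
      exact hinner_new


lemma exists_good_seq [CompleteSpace H] (g : ℕ → H)
    (hb : ∀ x : H, ∀ s : Finset ℕ, ∑ k ∈ s, ‖⟪g k, x⟫‖ ^ 2 ≤ ‖x‖ ^ 2)
    (hnorm : ‖g 0‖ = 1) :
    ∃ e : ℕ → H,
      (∀ n, ‖e n‖ = 1) ∧
      (∀ n : ℕ, ∃ r : ℝ, 0 ≤ r ∧ ⟪e n, e (n + 1)⟫ = (r : ℂ)) ∧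
      g 0 = e 0 ∧
      (∀ n, 0 < n → g n = e n - ∑ i ∈ Finset.range n, ⟪e i, e n⟫ • g i) := by
  classical
  let C : ∀ n : ℕ, {v : ℕ → H // Good g n v} := fun n =>
    Nat.rec ⟨fun _ => g 0, good_zero g hnorm⟩
      (fun n p => ⟨Classical.choose (step_exists g hb n p.1 p.2),
        (Classical.choose_spec (step_exists g hb n p.1 p.2)).1⟩) n
  have hCsucc : ∀ n, ∀ k, k ≤ n → (C (n+1)).1 k = (C n).1 k := fun n =>
    (Classical.choose_spec (step_exists g hb n (C n).1 (C n).2)).2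
  set E : ℕ → H := fun n => (C n).1 n with hE
  have agree : ∀ m n, n ≤ m → (C m).1 n = E n := by
    intro m
    induction m with
    | zero =>
      intro n hn
      interval_cases n
      rfl
    | succ m ih =>
      intro n hn
      rcases Nat.lt_succ_iff_lt_or_eq.mp (Nat.lt_succ_of_le hn) with h | h
      · rw [hCsucc m n (by omega), ih n (by omega)]
      · rw [h]
  have hE0 : g 0 = E 0 := (C 0).2.1
  have hEnorm : ∀ n, ‖E n‖ = 1 := fun n => (C n).2.2.1 n le_rfl
  have hErel : ∀ n, 0 < n → Rel g E n := by
    intro n hn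
    have h1 : Rel g (C n).1 n := (C n).2.2.2.1 n hn le_rfl
    exact rel_congr g (C n).1 E n (fun i hi => (agree n i hi).symm) h1
  have hEadm : ∀ n : ℕ, ∃ r : ℝ, 0 ≤ r ∧ ⟪E n, E (n + 1)⟫ = (r : ℂ) := by
    intro n
    obtain ⟨r, hr0, hrr⟩ := (C (n+1)).2.2.2.2 n le_rfl
    refine ⟨r, hr0, ?_⟩
    rw [← agree (n+1) n (by omega), ← agree (n+1) (n+1) le_rfl]
    exact hrr
  exact ⟨E, hEnorm, hEadm, hE0, fun n hn => hErel n hn⟩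

end KaczB

open KaczB in
theorem stable_bessel_unique_admissible_kaczmarz
    {H : Type*} [NormedAddCommGroup H] [InnerProductSpace ℂ H] [CompleteSpace H]
    (g : ℕ → H)
    (hbessel : ∀ x : H, ∀ s : Finset ℕ, ∑ n ∈ s, ‖⟪g n, x⟫‖ ^ 2 ≤ ‖x‖ ^ 2)
    (hnorm : ‖g 0‖ = 1)
    (hstable : ∀ N : ℕ,
      (Submodule.span ℂ (insert (g 0) (g '' {n | N ≤ n}))).topologicalClosure = ⊤) :
    (∃! e : ℕ → H,
      (∀ n, ‖e n‖ = 1) ∧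
      (∀ n : ℕ, ∃ r : ℝ, 0 ≤ r ∧ ⟪e n, e (n + 1)⟫ = (r : ℂ)) ∧
      g 0 = e 0 ∧
      (∀ n, 0 < n → g n = e n - ∑ i ∈ Finset.range n, ⟪e i, e n⟫ • g i)) ∧
    (∀ e : ℕ → H,
      ((∀ n, ‖e n‖ = 1) ∧
       (∀ n : ℕ, ∃ r : ℝ, 0 ≤ r ∧ ⟪e n, e (n + 1)⟫ = (r : ℂ)) ∧
       g 0 = e 0 ∧
       (∀ n, 0 < n → g n = e n - ∑ i ∈ Finset.range n, ⟪e i, e n⟫ • g i)) →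
      ∀ N : ℕ, (Submodule.span ℂ (e '' {n | N ≤ n})).topologicalClosure = ⊤) := by
  obtain ⟨E, hEnorm, hEadm, hE0, hErel⟩ := exists_good_seq g hbessel hnorm
  constructor
  · refine ⟨E, ⟨hEnorm, hEadm, hE0, hErel⟩, ?_⟩
    rintro y ⟨hynorm, hyadm, hy0, hyrel⟩
    exact uniq g y E hy0 (fun k hk => hyrel k hk) hynorm hyadm
      hE0 (fun k hk => hErel k hk) hEnorm hEadm hstable
  · rintro e ⟨henorm, headm, he0, herel⟩ N
    exact stab g e he0 (fun k hk => herel k hk) henorm hstable N
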